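/- Let R be a finite poset. Then for every finite digraph S: R ⊑_Γ S with respect to the class P of finite posets if and only if #S(G,R) ≤ #S(G,S) for every finite poset G. The same equivalence holds with P replaced by the class P* of finite irreflexive antisymmetric transitive digraphs and R ∈ P*. -/

import Mathlib

/-- A homomorphism between digraphs `(V, A)` and `(W, B)`:
a map sending every arc to an arc. -/
def IsHom {V W : Type} (A : V → V → Prop) (B : W → W → Prop) (f : V → W) : Prop :=
  ∀ ⦃v w : V⦄, A v w → B (f v) (f w)

/-- A strict homomorphism: a homomorphism mapping proper arcs to proper arcs. -/
def IsStrictHom {V W : Type} (A : V → V → Prop) (B : W → W → Prop) (f : V → W) : Prop :=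
  IsHom A B f ∧ ∀ ⦃v w : V⦄, A v w → v ≠ w → f v ≠ f w

/-- Adjacency in a digraph. -/
def DAdj {V : Type} (A : V → V → Prop) (v w : V) : Prop := A v w ∨ A w v

/-- `v` and `w` are connected in `X`: `v = w` (with `v ∈ X`), or there is a line
`z 0, …, z I` inside `X` connecting them, consecutive members being adjacent. -/
def ConnIn {V : Type} (A : V → V → Prop) (X : Set V) (v w : V) : Prop :=
  ∃ (I : ℕ) (z : ℕ → V), z 0 = v ∧ z I = w ∧ (∀ i ≤ I, z i ∈ X) ∧
    ∀ i < I, DAdj A (z i) (z (i + 1))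

/-- `γ_X(v)`: the set of `w ∈ X` connected with `v` in `X`. -/
def gammaSet {V : Type} (A : V → V → Prop) (X : Set V) (v : V) : Set V :=
  {w | ConnIn A X v w}

/-- `Γ_ξ(v)`: the connectivity component of `v` in the preimage `ξ⁻¹(ξ(v))`. -/
def GammaComp {V W : Type} (A : V → V → Prop) (ξ : V → W) (v : V) : Set V :=
  gammaSet A {u | ξ u = ξ v} v

/-- The set of homomorphisms `H(G,H)` (as a type). -/
def HomSet {V W : Type} (A : V → V → Prop) (B : W → W → Prop) : Type :=
  {f : V → W // IsHom A B f}

/-- The set of strict homomorphisms `S(G,H)` (as a type). -/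
def StrictHomSet {V W : Type} (A : V → V → Prop) (B : W → W → Prop) : Type :=
  {f : V → W // IsStrictHom A B f}

/-- The vertex set of the digraph `G_ξ`: the components `Γ_ξ(v)`, `v ∈ V(G)`. -/
def GVert {V W : Type} (A : V → V → Prop) (ξ : V → W) : Type :=
  {C : Set V // ∃ v, C = GammaComp A ξ v}

/-- The arc relation of the digraph `G_ξ`. -/
def GArc {V W : Type} (A : V → V → Prop) (ξ : V → W) :
    GVert A ξ → GVert A ξ → Prop :=
  fun C D => ∃ a ∈ C.1, ∃ b ∈ D.1, A a b

/-- The canonical map `π_ξ : G → G_ξ`, `v ↦ Γ_ξ(v)`. -/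
def piMap {V W : Type} (A : V → V → Prop) (ξ : V → W) (v : V) : GVert A ξ :=
  ⟨GammaComp A ξ v, v, rfl⟩

/-- `Θ_{G,H'}(ξ)`: the homomorphisms `ζ : G → H'` with `G_ζ = G_ξ`
(equality of the digraphs `G_ζ` and `G_ξ`, i.e. of their vertex sets,
which determines the arc sets). -/
def ThetaSet {V W W' : Type} (A : V → V → Prop) (B' : W' → W' → Prop)
    (ξ : V → W) : Set (V → W') :=
  {ζ | IsHom A B' ζ ∧
    {C : Set V | ∃ v, C = GammaComp A ζ v} = {C : Set V | ∃ v, C = GammaComp A ξ v}}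

/-- `R ⊑_Γ S` with respect to a class `D'` of finite digraphs: a strong Γ-scheme
from `R` to `S` exists, i.e. for every finite digraph `G ∈ D'` an injective map
`ρ_G : H(G,R) → H(G,S)` with `Γ_{ρ_G(ξ)}(v) = Γ_ξ(v)` for all `ξ`, `v`. -/
def SqGamma (D' : (V : Type) → (V → V → Prop) → Prop)
    {VR VS : Type} (R : VR → VR → Prop) (S : VS → VS → Prop) : Prop :=
  ∀ (V : Type) [Finite V] [Nonempty V] (A : V → V → Prop), D' V A →
    ∃ ρ : HomSet A R → HomSet A S, Function.Injective ρ ∧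
      ∀ (ξ : HomSet A R) (v : V), GammaComp A (ρ ξ).1 v = GammaComp A ξ.1 v

/-- The class `T_a`: digraphs whose loop-removed digraph is acyclic,
i.e. every closed walk is trivial. -/
def Ta {V : Type} (A : V → V → Prop) : Prop :=
  ∀ (z : ℕ → V) (I : ℕ), 0 < I →
    (∀ i < I, A (z i) (z (i + 1)) ∧ z i ≠ z (i + 1)) → z 0 ≠ z I

/-- A poset: a reflexive, antisymmetric, transitive digraph. -/
def IsPosetRel {V : Type} (A : V → V → Prop) : Prop :=
  Reflexive A ∧ AntiSymmetric A ∧ Transitive A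

/-- An element of `P^*`: an irreflexive, antisymmetric, transitive digraph. -/
def IsStrictPosetRel {V : Type} (A : V → V → Prop) : Prop :=
  Irreflexive A ∧ AntiSymmetric A ∧ Transitive A

/-- The direct (disjoint) sum of two digraphs. -/
def sumRel {V W : Type} (A : V → V → Prop) (B : W → W → Prop) :
    V ⊕ W → V ⊕ W → Prop
  | Sum.inl v, Sum.inl w => A v w
  | Sum.inr v, Sum.inr w => B v w
  | _, _ => False

/-- The open neighborhood `N(v)`. -/
def Nbr {Z : Type} (A : Z → Z → Prop) (v : Z) : Set Z :=
  {w | w ≠ v ∧ (A v w ∨ A w v)}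

/-- The in-neighborhood `N^in(v)`. -/
def NIn {Z : Type} (A : Z → Z → Prop) (v : Z) : Set Z :=
  {w | w ≠ v ∧ A w v}

/-- The out-neighborhood `N^out(v)`. -/
def NOut {Z : Type} (A : Z → Z → Prop) (v : Z) : Set Z :=
  {w | w ≠ v ∧ A v w}

/-- `A_r`: the arcs of `R` minus all arcs between `M` and `X`. -/
def ArRel {Z : Type} (A : Z → Z → Prop) (X M : Set Z) : Z → Z → Prop :=
  fun v w => A v w ∧ ¬(v ∈ M ∧ w ∈ X) ∧ ¬(v ∈ X ∧ w ∈ M)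

/-- `A_d = { m β(x) : m x ∈ A(R) ∩ (M × X) }`. -/
def AdRel {Z : Type} (A : Z → Z → Prop) (X M : Set Z) (β : Z → Z) : Z → Z → Prop :=
  fun v w => v ∈ M ∧ ∃ x ∈ X, A v x ∧ w = β x

/-- `A_u = { β(x) m : x m ∈ A(R) ∩ (X × M) }`. -/
def AuRel {Z : Type} (A : Z → Z → Prop) (X M : Set Z) (β : Z → Z) : Z → Z → Prop :=
  fun v w => w ∈ M ∧ ∃ x ∈ X, A x w ∧ v = β x

/-- The rearranged digraph `S`, with `A(S) = A_r ∪ A_d ∪ A_u`. -/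
def SRel {Z : Type} (A : Z → Z → Prop) (X M : Set Z) (β : Z → Z) : Z → Z → Prop :=
  fun v w => ArRel A X M v w ∨ AdRel A X M β v w ∨ AuRel A X M β v w

/-- `U_ξ = { v : ξ(v) ∈ T and ξ[N_G(v)] ∩ M ≠ ∅ }` (for `T = X`; with `T = Y`
this gives `U'_ζ`). -/
def USet {V Z : Type} (AG : V → V → Prop) (T M : Set Z) (ξ : V → Z) : Set V :=
  {v | ξ v ∈ T ∧ ∃ w ∈ Nbr AG v, ξ w ∈ M}

open Classical in
/-- The rearranged homomorphism `ρ_G(ξ)`: `β(ξ(v))` on `U_ξ` and `ξ(v)` elsewhere. -/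
noncomputable def rhoMap {V Z : Type} (AG : V → V → Prop) (X M : Set Z) (β : Z → Z)
    (ξ : V → Z) : V → Z :=
  fun v => if v ∈ USet AG X M ξ then β (ξ v) else ξ v

section Conn
variable {V W : Type}

lemma connIn_mem_left {A : V → V → Prop} {X : Set V} {v w : V} (h : ConnIn A X v w) : v ∈ X := by
  obtain ⟨I, z, h0, hI, hmem, _⟩ := h
  have := hmem 0 (Nat.zero_le I); rwa [h0] at this

lemma connIn_mem_right {A : V → V → Prop} {X : Set V} {v w : V} (h : ConnIn A X v w) : w ∈ X := by
  obtain ⟨I, z, h0, hI, hmem, _⟩ := h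
  have := hmem I le_rfl; rwa [hI] at this

lemma connIn_refl {A : V → V → Prop} {X : Set V} {v : V} (hv : v ∈ X) : ConnIn A X v v :=
  ⟨0, fun _ => v, rfl, rfl, fun _ _ => hv, fun i hi => absurd hi (Nat.not_lt_zero i)⟩

lemma connIn_symm {A : V → V → Prop} {X : Set V} {v w : V} (h : ConnIn A X v w) :
    ConnIn A X w v := by
  obtain ⟨I, z, h0, hI, hmem, hadj⟩ := h
  refine ⟨I, fun i => z (I - i), by simpa using hI, by simpa using h0,
    fun i _ => hmem _ (Nat.sub_le _ _), fun i hi => ?_⟩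
  have h1 : I - i = (I - (i+1)) + 1 := by omega
  show DAdj A (z (I - i)) (z (I - (i + 1)))
  rw [h1]
  exact Or.symm (hadj (I - (i+1)) (by omega))

lemma connIn_trans {A : V → V → Prop} {X : Set V} {u v w : V}
    (h1 : ConnIn A X u v) (h2 : ConnIn A X v w) : ConnIn A X u w := by
  obtain ⟨I, z, hz0, hzI, hzmem, hzadj⟩ := h1
  obtain ⟨J, y, hy0, hyJ, hymem, hyadj⟩ := h2
  refine ⟨I + J, fun i => if i ≤ I then z i else y (i - I), by simp [hz0], ?_, ?_, ?_⟩
  · show (if I + J ≤ I then z (I + J) else y (I + J - I)) = w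
    by_cases h : J = 0
    · subst h
      simp only [Nat.add_zero, if_pos le_rfl]
      rw [hzI, ← hy0]; exact hyJ
    · rw [if_neg (by omega), show I + J - I = J by omega]; exact hyJ
  · intro i hi
    show (if i ≤ I then z i else y (i - I)) ∈ X
    by_cases h : i ≤ I
    · rw [if_pos h]; exact hzmem i h
    · rw [if_neg h]; exact hymem (i - I) (by omega)
  · intro i hi
    show DAdj A (if i ≤ I then z i else y (i - I)) (if i + 1 ≤ I then z (i+1) else y (i + 1 - I))
    by_cases h : i + 1 ≤ I
    · rw [if_pos (by omega : i ≤ I), if_pos h]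
      exact hzadj i (by omega)
    · by_cases h' : i ≤ I
      · have hiI : i = I := by omega
        rw [if_pos h', if_neg h, hiI, hzI, ← hy0, show I + 1 - I = 0 + 1 by omega]
        exact hyadj 0 (by omega)
      · rw [if_neg h', if_neg h, show i + 1 - I = (i - I) + 1 by omega]
        exact hyadj (i - I) (by omega)

lemma connIn_prefix {A : V → V → Prop} {X : Set V} {v : V} (I : ℕ) (z : ℕ → V)
    (h0 : z 0 = v) (hmem : ∀ i ≤ I, z i ∈ X) (hadj : ∀ i < I, DAdj A (z i) (z (i+1)))
    {i : ℕ} (hi : i ≤ I) : ConnIn A X v (z i) :=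
  ⟨i, z, h0, rfl, fun j hj => hmem j (le_trans hj hi), fun j hj => hadj j (lt_of_lt_of_le hj hi)⟩

lemma mem_gammaComp_self (A : V → V → Prop) (ξ : V → W) (v : V) : v ∈ GammaComp A ξ v :=
  connIn_refl rfl

lemma gammaComp_fiber {A : V → V → Prop} {ξ : V → W} {v w : V}
    (h : w ∈ GammaComp A ξ v) : ξ w = ξ v := by
  have h' : ConnIn A {u | ξ u = ξ v} v w := h
  have h2 := connIn_mem_right h'
  exact h2

lemma gammaComp_eq_of_mem {A : V → V → Prop} {ξ : V → W} {v w : V}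
    (h : w ∈ GammaComp A ξ v) : GammaComp A ξ w = GammaComp A ξ v := by
  have hf : ξ w = ξ v := gammaComp_fiber h
  have hX : {u | ξ u = ξ w} = {u | ξ u = ξ v} := by ext u; simp [hf]
  unfold GammaComp gammaSet
  rw [hX]
  ext u
  constructor
  · exact fun hu => connIn_trans h hu
  · exact fun hu => connIn_trans (connIn_symm h) hu

lemma mem_gamma_of_arc {A : V → V → Prop} {ξ : V → W} {a b : V}
    (hab : A a b) (h : ξ b = ξ a) : b ∈ GammaComp A ξ a := by
  refine ⟨1, fun i => if i = 0 then a else b, by simp, by simp, ?_, ?_⟩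
  · intro i _
    by_cases h0 : i = 0
    · simp only [h0, if_pos rfl]; exact rfl
    · simp only [if_neg h0]; exact h
  · intro i hi
    have h0 : i = 0 := by omega
    subst h0
    simp only [if_pos rfl, if_neg one_ne_zero]
    exact Or.inl hab

end Conn

section Strict
variable {V W : Type}

lemma gammaComp_eq_singleton_of_strict {A : V → V → Prop} {B : W → W → Prop} {ξ : V → W}
    (hs : IsStrictHom A B ξ) (v : V) : GammaComp A ξ v = {v} := by
  ext w
  simp only [Set.mem_singleton_iff]
  constructor
  · rintro ⟨I, z, h0, hI, hmem, hadj⟩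
    have key : ∀ i ≤ I, z i = v := by
      intro i hi
      induction i with
      | zero => exact h0
      | succ n ih =>
        have hn := ih (by omega)
        have hadj' := hadj n (by omega)
        rw [hn] at hadj'
        have hmem' : ξ (z (n+1)) = ξ v := hmem (n+1) hi
        by_contra hne
        rcases hadj' with h | h
        · exact hs.2 h (fun e => hne e.symm) hmem'.symm
        · exact hs.2 h hne hmem'
    rw [← hI]; exact key I le_rfl
  · intro h; subst h; exact mem_gammaComp_self A ξ _

lemma strict_of_gamma_singleton {A : V → V → Prop} {B : W → W → Prop} {ξ : V → W}
    (hh : IsHom A B ξ) (hγ : ∀ v, GammaComp A ξ v = {v}) : IsStrictHom A B ξ := by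
  refine ⟨hh, fun v w hvw hne hEq => ?_⟩
  have hw : w ∈ GammaComp A ξ v := mem_gamma_of_arc hvw hEq.symm
  rw [hγ v] at hw
  exact hne hw.symm

lemma hom_strict_of_irrefl {VR : Type} {R : VR → VR → Prop} (hR : Irreflexive R)
    {A : V → V → Prop} {f : V → VR} (hf : IsHom A R f) : IsStrictHom A R f := by
  refine ⟨hf, fun v w hvw _ hEq => ?_⟩
  have := hf hvw
  rw [hEq] at this
  exact hR _ this

lemma exists_inj_of_card_le {α β : Type} [Finite α] [Finite β]
    (h : Nat.card α ≤ Nat.card β) : ∃ g : α → β, Function.Injective g := by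
  haveI := Fintype.ofFinite α; haveI := Fintype.ofFinite β
  rw [Nat.card_eq_fintype_card, Nat.card_eq_fintype_card] at h
  obtain ⟨g⟩ := Function.Embedding.nonempty_of_card_le h
  exact ⟨g, g.injective⟩

lemma forward_card {VR VS V : Type} [Finite V] [Finite VS]
    {R : VR → VR → Prop} {S : VS → VS → Prop} {A : V → V → Prop}
    (ρ : HomSet A R → HomSet A S) (hinj : Function.Injective ρ)
    (hΓ : ∀ (ξ : HomSet A R) (v : V), GammaComp A (ρ ξ).1 v = GammaComp A ξ.1 v) :
    Nat.card (StrictHomSet A R) ≤ Nat.card (StrictHomSet A S) := by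
  have hst : ∀ ξ : StrictHomSet A R, IsStrictHom A S (ρ ⟨ξ.1, ξ.2.1⟩).1 := by
    intro ξ
    refine strict_of_gamma_singleton (ρ _).2 (fun v => ?_)
    refine (hΓ _ v).trans ?_
    exact gammaComp_eq_singleton_of_strict ξ.2 v
  have hinj2 : Function.Injective
      (fun ξ : StrictHomSet A R => (⟨(ρ ⟨ξ.1, ξ.2.1⟩).1, hst ξ⟩ : StrictHomSet A S)) := by
    intro a b hab
    have h0 := congrArg (fun x : StrictHomSet A S => x.1) hab
    have h1 := hinj (Subtype.ext h0)
    have h2 := congrArg (fun x : HomSet A R => x.1) h1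
    exact Subtype.ext h2
  haveI : Finite (StrictHomSet A S) := inferInstanceAs (Finite {f : V → VS // IsStrictHom A S f})
  exact Nat.card_le_card_of_injective _ hinj2

end Strict

section Quot
variable {V W : Type}

/-- The set of Γ-components of `ξ`. -/
def compsOf (A : V → V → Prop) (ξ : V → W) : Set (Set V) :=
  {C | ∃ v, C = GammaComp A ξ v}

/-- Quotient arc relation on an abstract partition `P`. -/
def QA' (A : V → V → Prop) (P : Set (Set V)) :
    {C : Set V // C ∈ P} → {C : Set V // C ∈ P} → Prop :=
  fun C D => ∃ a ∈ C.1, ∃ b ∈ D.1, A a b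

open Classical in
noncomputable def pickElem [Nonempty V] (C : Set V) : V :=
  if h : C.Nonempty then h.choose else Classical.arbitrary V

lemma pickElem_mem [Nonempty V] {C : Set V} (h : C.Nonempty) : pickElem C ∈ C := by
  rw [pickElem, dif_pos h]; exact h.choose_spec

/-- The induced map on the quotient. -/
noncomputable def barFun [Nonempty V] (ξ : V → W) (P : Set (Set V)) :
    {C : Set V // C ∈ P} → W := fun C => ξ (pickElem C.1)

lemma comps_mem {A : V → V → Prop} (ξ : V → W) (v : V) :
    GammaComp A ξ v ∈ compsOf A ξ := ⟨v, rfl⟩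

lemma comps_nonempty {A : V → V → Prop} {ξ : V → W} {C : Set V}
    (hC : C ∈ compsOf A ξ) : C.Nonempty := by
  obtain ⟨v, rfl⟩ := hC; exact ⟨v, mem_gammaComp_self A ξ v⟩

lemma comps_eq_gamma {A : V → V → Prop} {ξ : V → W} {C : Set V}
    (hC : C ∈ compsOf A ξ) {a : V} (ha : a ∈ C) : C = GammaComp A ξ a := by
  obtain ⟨u, rfl⟩ := hC; exact (gammaComp_eq_of_mem ha).symm

lemma comps_const {A : V → V → Prop} {ξ : V → W} {C : Set V}
    (hC : C ∈ compsOf A ξ) {a b : V} (ha : a ∈ C) (hb : b ∈ C) : ξ a = ξ b := by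
  rw [comps_eq_gamma hC ha] at hb
  exact (gammaComp_fiber hb).symm

lemma gamma_eq_of_comps_eq {W' : Type} {A : V → V → Prop} {ξ : V → W} {η : V → W'}
    (h : compsOf A η = compsOf A ξ) (v : V) : GammaComp A η v = GammaComp A ξ v := by
  have h1 : GammaComp A η v ∈ compsOf A ξ := h ▸ comps_mem η v
  exact comps_eq_gamma h1 (mem_gammaComp_self A η v)

lemma bar_recover [Nonempty V] {A : V → V → Prop} {ζ : V → W} {P : Set (Set V)}
    (hP : compsOf A ζ = P) {v : V} (C : {C : Set V // C ∈ P}) (hv : v ∈ C.1) :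
    barFun ζ P C = ζ v := by
  have hC : C.1 ∈ compsOf A ζ := by rw [hP]; exact C.2
  exact comps_const hC (pickElem_mem (comps_nonempty hC)) hv

lemma bar_strict [Nonempty V] {A : V → V → Prop} {B : W → W → Prop}
    {ζ : V → W} {P : Set (Set V)} (hP : compsOf A ζ = P) (hζ : IsHom A B ζ) :
    IsStrictHom (QA' A P) B (barFun ζ P) := by
  constructor
  · rintro C D ⟨a, ha, b, hb, hab⟩
    rw [bar_recover hP C ha, bar_recover hP D hb]
    exact hζ hab
  · rintro C D ⟨a, ha, b, hb, hab⟩ hne hEq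
    rw [bar_recover hP C ha, bar_recover hP D hb] at hEq
    have hCa : C.1 ∈ compsOf A ζ := by rw [hP]; exact C.2
    have hDb : D.1 ∈ compsOf A ζ := by rw [hP]; exact D.2
    have hbmem : b ∈ GammaComp A ζ a := mem_gamma_of_arc hab hEq.symm
    have h1 : C.1 = GammaComp A ζ a := comps_eq_gamma hCa ha
    have h2 : D.1 = GammaComp A ζ b := comps_eq_gamma hDb hb
    have h3 : GammaComp A ζ b = GammaComp A ζ a := gammaComp_eq_of_mem hbmem
    exact hne (Subtype.ext (by rw [h1, h2, h3]))

end Quot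

section RTG
variable {VR α : Type}

lemma rtg_mono {Q : α → α → Prop} {R : VR → VR → Prop} (hR : IsPosetRel R)
    {f : α → VR} (hf : IsHom Q R f) {C D : α} (h : Relation.ReflTransGen Q C D) :
    R (f C) (f D) := by
  induction h with
  | refl => exact hR.1 _
  | tail _ h2 ih => exact hR.2.2 ih (hf h2)

lemma rtg_key {Q : α → α → Prop} {R : VR → VR → Prop} (hR : IsPosetRel R)
    {f : α → VR} (hf : IsStrictHom Q R f) {C D : α} (h : Relation.ReflTransGen Q C D) :
    f C = f D → C = D := by
  induction h with
  | refl => exact fun _ => rfl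
  | @tail b c h1 h2 ih =>
    intro hfd
    have m1 : R (f C) (f b) := rtg_mono hR hf.1 h1
    have m2 : R (f b) (f c) := hf.1 h2
    have m1' : R (f c) (f b) := by rw [← hfd]; exact m1
    have e1 : f b = f c := hR.2.1 m2 m1'
    have e2 : C = b := ih (hfd.trans e1.symm)
    subst e2
    by_contra hne
    exact hf.2 h2 hne hfd

lemma strictHom_rtg_iff {Q : α → α → Prop} {R : VR → VR → Prop} (hR : IsPosetRel R)
    (f : α → VR) :
    IsStrictHom Q R f ↔ IsStrictHom (fun C D => Relation.ReflTransGen Q C D) R f := by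
  constructor
  · intro hf
    exact ⟨fun C D h => rtg_mono hR hf.1 h,
      fun C D h hne hfd => hne (rtg_key hR hf h hfd)⟩
  · intro hf
    exact ⟨fun C D h => hf.1 (Relation.ReflTransGen.single h),
      fun C D h hne => hf.2 (Relation.ReflTransGen.single h) hne⟩

lemma strictHom_of_rtg {β : Type} {B : β → β → Prop} {Q : α → α → Prop} {f : α → β}
    (hf : IsStrictHom (fun C D => Relation.ReflTransGen Q C D) B f) : IsStrictHom Q B f :=
  ⟨fun _ _ h => hf.1 (Relation.ReflTransGen.single h),
   fun _ _ h hne => hf.2 (Relation.ReflTransGen.single h) hne⟩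

lemma rtg_poset {Q : α → α → Prop} {R : VR → VR → Prop} (hR : IsPosetRel R)
    {f : α → VR} (hf : IsStrictHom Q R f) :
    IsPosetRel (fun C D => Relation.ReflTransGen Q C D) := by
  refine ⟨fun C => Relation.ReflTransGen.refl, fun C D h1 h2 => ?_,
    fun a b c h1 h2 => Relation.ReflTransGen.trans h1 h2⟩
  exact rtg_key hR hf h1 (hR.2.1 (rtg_mono hR hf.1 h1) (rtg_mono hR hf.1 h2))

lemma theta_exists {VS : Type} [Finite VR] [Nonempty VR] [Finite VS] [Nonempty VS]
    [Finite α] [Nonempty α] {R : VR → VR → Prop} {S : VS → VS → Prop} (hR : IsPosetRel R)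
    (hyp : ∀ (V : Type) [Finite V] [Nonempty V] (A : V → V → Prop), IsPosetRel A →
      Nat.card (StrictHomSet A R) ≤ Nat.card (StrictHomSet A S))
    (Q : α → α → Prop) (f : α → VR) (hf : IsStrictHom Q R f) :
    ∃ g : StrictHomSet Q R → StrictHomSet Q S, Function.Injective g := by
  have hposet : IsPosetRel (fun C D => Relation.ReflTransGen Q C D) := rtg_poset hR hf
  have h1 := hyp α (fun C D => Relation.ReflTransGen Q C D) hposet
  have e1 : Nat.card (StrictHomSet Q R) =
      Nat.card (StrictHomSet (fun C D => Relation.ReflTransGen Q C D) R) :=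
    Nat.card_congr (Equiv.subtypeEquivRight fun g => strictHom_rtg_iff hR g)
  haveI : Finite (StrictHomSet Q S) :=
    inferInstanceAs (Finite {g : α → VS // IsStrictHom Q S g})
  have h2 : Nat.card (StrictHomSet (fun C D => Relation.ReflTransGen Q C D) S) ≤
      Nat.card (StrictHomSet Q S) := by
    refine Nat.card_le_card_of_injective
      (fun g => (⟨g.1, strictHom_of_rtg g.2⟩ : StrictHomSet Q S)) ?_
    intro a b hab
    have h0 := congrArg (fun x : StrictHomSet Q S => x.1) hab
    exact Subtype.ext h0
  haveI : Finite (StrictHomSet Q R) :=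
    inferInstanceAs (Finite {g : α → VR // IsStrictHom Q R g})
  exact exists_inj_of_card_le (e1 ▸ le_trans h1 h2)

end RTG

section Pres
variable {V W VS : Type}

lemma gamma_pres {A : V → V → Prop} {ξ : V → W} {P : Set (Set V)}
    (hP : compsOf A ξ = P) {B : VS → VS → Prop}
    (g : {C : Set V // C ∈ P} → VS) (hg : IsStrictHom (QA' A P) B g)
    (cmp : V → {C : Set V // C ∈ P}) (hcmp : ∀ v, (cmp v).1 = GammaComp A ξ v) (v : V) :
    GammaComp A (fun u => g (cmp u)) v = GammaComp A ξ v := by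
  have hconst : ∀ {u u' : V}, u' ∈ GammaComp A ξ u → g (cmp u') = g (cmp u) := by
    intro u u' hu
    have h1 : (cmp u').1 = (cmp u).1 := by
      rw [hcmp, hcmp]; exact gammaComp_eq_of_mem hu
    exact congrArg g (Subtype.ext h1)
  have hself : ∀ u : V, u ∈ (cmp u).1 := by
    intro u; rw [hcmp]; exact mem_gammaComp_self A ξ u
  ext w
  constructor
  · rintro ⟨I, z, h0, hI, hmem, hadj⟩
    have key : ∀ i ≤ I, z i ∈ GammaComp A ξ v := by
      intro i hi
      induction i with
      | zero => rw [h0]; exact mem_gammaComp_self A ξ v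
      | succ n ih =>
        have hn : z n ∈ GammaComp A ξ v := ih (by omega)
        have hz1 : g (cmp (z (n+1))) = g (cmp v) := hmem (n+1) hi
        have hz0 : g (cmp (z n)) = g (cmp v) := hmem n (by omega)
        by_cases hCD : cmp (z (n+1)) = cmp (z n)
        · have m1 : z (n+1) ∈ (cmp (z (n+1))).1 := hself _
          rw [hCD, hcmp] at m1
          exact (gammaComp_eq_of_mem hn) ▸ m1
        · exfalso
          rcases hadj n (by omega) with h | h
          · exact hg.2 ⟨_, hself (z n), _, hself (z (n+1)), h⟩
              (fun e => hCD e.symm) (hz0.trans hz1.symm)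
          · exact hg.2 ⟨_, hself (z (n+1)), _, hself (z n), h⟩ hCD (hz1.trans hz0.symm)
    rw [← hI]; exact key I le_rfl
  · rintro ⟨I, z, h0, hI, hmem, hadj⟩
    refine ⟨I, z, h0, hI, fun i hi => ?_, hadj⟩
    have hz : z i ∈ GammaComp A ξ v := connIn_prefix I z h0 hmem hadj hi
    exact hconst hz

end Pres

lemma backward_poset {VR VS : Type} [Finite VR] [Nonempty VR] [Finite VS] [Nonempty VS]
    {R : VR → VR → Prop} {S : VS → VS → Prop} (hR : IsPosetRel R)
    (hyp : ∀ (V : Type) [Finite V] [Nonempty V] (A : V → V → Prop), IsPosetRel A →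
      Nat.card (StrictHomSet A R) ≤ Nat.card (StrictHomSet A S)) :
    SqGamma (fun _ A => IsPosetRel A) R S := by
  intro V _ _ A _
  classical
  have hF : ∀ P : Set (Set V),
      ∃ F : {ξ : HomSet A R // compsOf A ξ.1 = P} → {η : HomSet A S // compsOf A η.1 = P},
        Function.Injective F := by
    intro P
    by_cases hex : ∃ ξ : HomSet A R, compsOf A ξ.1 = P
    · obtain ⟨ξ₀, hξ₀⟩ := hex
      haveI : Finite {C : Set V // C ∈ P} := inferInstance
      haveI : Nonempty {C : Set V // C ∈ P} :=
        ⟨⟨GammaComp A ξ₀.1 (Classical.arbitrary V), hξ₀ ▸ comps_mem ξ₀.1 _⟩⟩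
      set cmp : V → {C : Set V // C ∈ P} :=
        fun v => ⟨GammaComp A ξ₀.1 v, hξ₀ ▸ comps_mem ξ₀.1 v⟩ with hcmpdef
      have hcmp : ∀ v, (cmp v).1 = GammaComp A ξ₀.1 v := fun v => rfl
      have hself : ∀ u : V, u ∈ (cmp u).1 := fun u => mem_gammaComp_self A ξ₀.1 u
      have hbar0 : IsStrictHom (QA' A P) R (barFun ξ₀.1 P) := bar_strict hξ₀ ξ₀.2
      obtain ⟨θ, hθ⟩ := theta_exists hR hyp (QA' A P) _ hbar0
      -- the map into the quotient strict homs
      have hΦstrict : ∀ ξ : {ξ : HomSet A R // compsOf A ξ.1 = P},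
          IsStrictHom (QA' A P) R (barFun ξ.1.1 P) := fun ξ => bar_strict ξ.2 ξ.1.2
      set Φ : {ξ : HomSet A R // compsOf A ξ.1 = P} → StrictHomSet (QA' A P) R :=
        fun ξ => ⟨barFun ξ.1.1 P, hΦstrict ξ⟩ with hΦdef
      have hΦinj : Function.Injective Φ := by
        intro ξ ξ' h
        have h1 : barFun ξ.1.1 P = barFun ξ'.1.1 P :=
          congrArg (fun x : StrictHomSet (QA' A P) R => x.1) h
        apply Subtype.ext; apply Subtype.ext; funext v
        have e1 : barFun ξ.1.1 P (cmp v) = ξ.1.1 v := by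
          apply bar_recover ξ.2 (cmp v)
          rw [hcmp, ← gamma_eq_of_comps_eq (ξ.2.trans hξ₀.symm) v]
          exact mem_gammaComp_self A ξ.1.1 v
        have e2 : barFun ξ'.1.1 P (cmp v) = ξ'.1.1 v := by
          apply bar_recover ξ'.2 (cmp v)
          rw [hcmp, ← gamma_eq_of_comps_eq (ξ'.2.trans hξ₀.symm) v]
          exact mem_gammaComp_self A ξ'.1.1 v
        rw [← e1, ← e2, h1]
      -- the map back from quotient strict homs to homs with components P
      have hΨhom : ∀ g : StrictHomSet (QA' A P) S, IsHom A S (fun v => g.1 (cmp v)) := by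
        intro g v w hvw
        exact g.2.1 ⟨v, hself v, w, hself w, hvw⟩
      have hΨcomps : ∀ g : StrictHomSet (QA' A P) S,
          compsOf A (fun v => g.1 (cmp v)) = P := by
        intro g
        have hγ : ∀ v, GammaComp A (fun u => g.1 (cmp u)) v = GammaComp A ξ₀.1 v :=
          gamma_pres hξ₀ g.1 g.2 cmp hcmp
        have h2 : compsOf A (fun v => g.1 (cmp v)) = compsOf A ξ₀.1 := by
          unfold compsOf
          ext C
          simp only [Set.mem_setOf_eq, hγ]
        exact h2.trans hξ₀
      set Ψ : StrictHomSet (QA' A P) S → {η : HomSet A S // compsOf A η.1 = P} :=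
        fun g => ⟨⟨fun v => g.1 (cmp v), hΨhom g⟩, hΨcomps g⟩ with hΨdef
      have hΨinj : Function.Injective Ψ := by
        intro g g' h
        have h1 : (fun v => g.1 (cmp v)) = (fun v => g'.1 (cmp v)) :=
          congrArg (fun x : {η : HomSet A S // compsOf A η.1 = P} => x.1.1) h
        apply Subtype.ext; funext C
        obtain ⟨c, hc⟩ := C
        have hc2 := hc
        rw [← hξ₀] at hc2
        obtain ⟨u, hu⟩ := hc2
        have hCu : (⟨c, hc⟩ : {C : Set V // C ∈ P}) = cmp u := Subtype.ext hu
        rw [hCu]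
        exact congrFun h1 u
      exact ⟨fun ξ => Ψ (θ (Φ ξ)), fun a b h => hΦinj (hθ (hΨinj h))⟩
    · exact ⟨fun x => absurd ⟨x.1, x.2⟩ hex, fun a _ _ => absurd ⟨a.1, a.2⟩ hex⟩
  choose F hFinj using hF
  refine ⟨fun ξ => (F (compsOf A ξ.1) ⟨ξ, rfl⟩).1, ?_, ?_⟩
  · intro ξ ξ' h
    have e1 : compsOf A ((F (compsOf A ξ.1) ⟨ξ, rfl⟩).1).1 = compsOf A ξ.1 :=
      (F (compsOf A ξ.1) ⟨ξ, rfl⟩).2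
    have e2 : compsOf A ((F (compsOf A ξ'.1) ⟨ξ', rfl⟩).1).1 = compsOf A ξ'.1 :=
      (F (compsOf A ξ'.1) ⟨ξ', rfl⟩).2
    have e3 := congrArg (fun t : HomSet A S => compsOf A t.1) h
    have hP : compsOf A ξ.1 = compsOf A ξ'.1 := e1.symm.trans (e3.trans e2)
    have key2 : ∀ (P P' : Set (Set V)) (_ : P = P')
        (x : {ξ : HomSet A R // compsOf A ξ.1 = P})
        (x' : {ξ : HomSet A R // compsOf A ξ.1 = P'}),
        (F P x).1 = (F P' x').1 → x.1 = x'.1 := by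
      rintro P P' rfl x x' hxx
      exact congrArg (fun t : {ξ : HomSet A R // compsOf A ξ.1 = P} => t.1)
        (hFinj P (Subtype.ext hxx))
    exact key2 _ _ hP ⟨ξ, rfl⟩ ⟨ξ', rfl⟩ h
  · intro ξ v
    have hc : compsOf A ((F (compsOf A ξ.1) ⟨ξ, rfl⟩).1).1 = compsOf A ξ.1 :=
      (F (compsOf A ξ.1) ⟨ξ, rfl⟩).2
    exact gamma_eq_of_comps_eq hc v

/-- For a finite poset `R` and every finite digraph `S`: `R ⊑_Γ S` with respect
to the class `P` of finite posets iff `#S(G,R) ≤ #S(G,S)` for every finite poset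
`G`; and the same with `P` replaced by the class `P*` of finite irreflexive
antisymmetric transitive digraphs (and `R ∈ P*`). -/
theorem stmt11 {VR VS : Type} [Finite VR] [Nonempty VR] [Finite VS] [Nonempty VS]
    (R : VR → VR → Prop) (S : VS → VS → Prop) :
    (IsPosetRel R →
      (SqGamma (fun _ A => IsPosetRel A) R S ↔
        ∀ (V : Type) [Finite V] [Nonempty V] (A : V → V → Prop), IsPosetRel A →
          Nat.card (StrictHomSet A R) ≤ Nat.card (StrictHomSet A S))) ∧
    (IsStrictPosetRel R →
      (SqGamma (fun _ A => IsStrictPosetRel A) R S ↔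
        ∀ (V : Type) [Finite V] [Nonempty V] (A : V → V → Prop), IsStrictPosetRel A →
          Nat.card (StrictHomSet A R) ≤ Nat.card (StrictHomSet A S))) := by
  constructor
  · intro hRp
    constructor
    · intro hsq V _ _ A hA
      obtain ⟨ρ, hinj, hΓ⟩ := hsq V A hA
      exact forward_card ρ hinj hΓ
    · intro hyp
      exact backward_poset hRp hyp
  · intro hRs
    constructor
    · intro hsq V _ _ A hA
      obtain ⟨ρ, hinj, hΓ⟩ := hsq V A hA
      exact forward_card ρ hinj hΓ
    · intro hyp V _ _ A hA
      haveI : Finite (StrictHomSet A R) :=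
        inferInstanceAs (Finite {f : V → VR // IsStrictHom A R f})
      haveI : Finite (StrictHomSet A S) :=
        inferInstanceAs (Finite {f : V → VS // IsStrictHom A S f})
      obtain ⟨g, hg⟩ := exists_inj_of_card_le (hyp V A hA)
      refine ⟨fun ξ => ⟨(g ⟨ξ.1, hom_strict_of_irrefl hRs.1 ξ.2⟩).1,
        (g ⟨ξ.1, hom_strict_of_irrefl hRs.1 ξ.2⟩).2.1⟩, ?_, ?_⟩
      · intro a b hab
        have h0 := congrArg (fun x : HomSet A S => x.1) hab
        have h1 := hg (Subtype.ext h0)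
        have h2 := congrArg (fun x : StrictHomSet A R => x.1) h1
        exact Subtype.ext h2
      · intro ξ v
        rw [gammaComp_eq_singleton_of_strict
              (g ⟨ξ.1, hom_strict_of_irrefl hRs.1 ξ.2⟩).2 v,
            gammaComp_eq_singleton_of_strict (hom_strict_of_irrefl hRs.1 ξ.2) v]
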